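/- If B is a binary anisotropic quadratic form over F with 2 × B hyperbolic and B represents a₁ ∈ F×, then B ≅ ⟨a₁, −a₁s₁⟩ for some s₁ ∈ F× which is a nonzero sum of two squares. -/

import Mathlib

open scoped TensorProduct Quaternion
open Module

universe u

section Defs
variable (F : Type u) [Field F]

def SumTwoSq (s : F) : Prop := s ≠ 0 ∧ ∃ a b : F, s = a ^ 2 + b ^ 2

def IsNonreal : Prop := ∃ (n : ℕ) (v : Fin n → F), ∑ i, v i ^ 2 = -1

def FormIsotropic {ι : Type} [Fintype ι] (w : ι → F) : Prop :=
  ∃ v : ι → F, v ≠ 0 ∧ ∑ i, w i * v i ^ 2 = 0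

def FormEquiv {ι κ : Type} [Fintype ι] [Fintype κ] (w : ι → F) (w' : κ → F) : Prop :=
  ∃ e : (ι → F) ≃ₗ[F] (κ → F), ∀ v : ι → F, ∑ j, w' j * (e v) j ^ 2 = ∑ i, w i * v i ^ 2

def FormHyperbolic {ι : Type} [Fintype ι] (w : ι → F) : Prop :=
  ∃ m : ℕ, FormEquiv F w (fun p : Fin m × Fin 2 => if p.2 = 0 then (1 : F) else -1)

def FormWittEquiv {ι κ : Type} [Fintype ι] [Fintype κ] (w : ι → F) (w' : κ → F) : Prop :=
  FormHyperbolic F (Sum.elim w (fun j => - w' j))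

def FormTorsion {ι : Type} [Fintype ι] (w : ι → F) : Prop :=
  ∃ k : ℕ, k ≠ 0 ∧ FormHyperbolic F (fun p : Fin k × ι => w p.2)

def FormInI2 {ι : Type} [Fintype ι] (w : ι → F) : Prop :=
  Even (Fintype.card ι) ∧
    IsSquare ((-1 : F) ^ (Fintype.card ι * (Fintype.card ι - 1) / 2) * ∏ i, w i)

def Pf2 (s t : F) : Fin 4 → F := ![1, -s, -t, s * t]

def UBound (u : ℕ) : Prop :=
  ∀ (ι : Type) [Fintype ι] (w : ι → F), (∀ i, w i ≠ 0) → FormTorsion F w →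
    ¬ FormIsotropic F w → Fintype.card ι ≤ u

def U2Bound (u : ℕ) : Prop :=
  ∀ (ι : Type) [Fintype ι] (w : ι → F), (∀ i, w i ≠ 0) →
    FormHyperbolic F (Sum.elim w w) → ¬ FormIsotropic F w → Fintype.card ι ≤ u

def BrEquiv (A B : Type u) [Ring A] [Algebra F A] [Ring B] [Algebra F B] : Prop :=
  ∃ n m : ℕ, n ≠ 0 ∧ m ≠ 0 ∧
    Nonempty (Matrix (Fin n) (Fin n) A ≃ₐ[F] Matrix (Fin m) (Fin m) B)

def SplitAlg (B : Type u) [Ring B] [Algebra F B] : Prop := BrEquiv F B F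

structure IndexWitness (A : Type u) [Ring A] [Algebra F A] (d : ℕ) where
  D : Type u
  [ringD : DivisionRing D]
  [algD : Algebra F D]
  rank : Module.finrank F D = d ^ 2
  equiv : BrEquiv F A D

def HasIndex (A : Type u) [Ring A] [Algebra F A] (d : ℕ) : Prop :=
  Nonempty (IndexWitness F A d)

structure CyclicAlgWitness (A : Type u) [Ring A] [Algebra F A] (d : ℕ) where
  K : Type u
  [fieldK : Field K]
  [algK : Algebra F K]
  emb : K →ₐ[F] A
  galois : IsGalois F K
  cyclic : IsCyclic (K ≃ₐ[F] K)
  deg : Module.finrank F K = d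
  rank : Module.finrank F A = d ^ 2

def IsCyclicAlg (A : Type u) [Ring A] [Algebra F A] (d : ℕ) : Prop :=
  IsSimpleRing A ∧ Algebra.IsCentral F A ∧ Nonempty (CyclicAlgWitness F A d)

structure CyclicDecompWitness (A : Type u) [Ring A] [Algebra F A] (n k : ℕ) where
  C : Fin k → Type u
  [ringC : ∀ i, Ring (C i)]
  [algC : ∀ i, Algebra F (C i)]
  cyclic : ∀ i, ∃ d, d ∣ n ∧ IsCyclicAlg F (C i) d
  equiv : BrEquiv F A (⨂[F] i, C i)

def Lambda2LE (l : ℕ) : Prop :=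
  ∀ (A : Type u) [Ring A] [Algebra F A], IsSimpleRing A → Algebra.IsCentral F A →
    FiniteDimensional F A → SplitAlg F (A ⊗[F] A) →
    ∃ m : ℕ, m ≤ l ∧ ∃ a b : Fin m → F, (∀ i, a i ≠ 0 ∧ b i ≠ 0) ∧
      BrEquiv F A (⨂[F] i : Fin m, ℍ[F, a i, b i])

def MuLE (l : ℕ) : Prop :=
  ∀ (A : Type u) [Ring A] [Algebra F A], IsSimpleRing A → Algebra.IsCentral F A →
    FiniteDimensional F A → SplitAlg F (⨂[F] _i : Fin 4, A) →
    ∃ m : ℕ, m ≤ l ∧ ∃ s t : Fin m → F, (∀ i, SumTwoSq F (s i) ∧ t i ≠ 0) ∧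
      BrEquiv F (A ⊗[F] A) (⨂[F] i : Fin m, ℍ[F, s i, t i])

def Lambda4LE (l : ℕ) : Prop :=
  ∀ (A : Type u) [Ring A] [Algebra F A], IsSimpleRing A → Algebra.IsCentral F A →
    FiniteDimensional F A → SplitAlg F (⨂[F] _i : Fin 4, A) →
    ∃ k : ℕ, k ≤ l ∧ Nonempty (CyclicDecompWitness F A 4 k)

end Defs

set_option maxHeartbeats 1000000 in
theorem binary_two_torsion_form (F : Type u) [Field F] (h2 : (2 : F) ≠ 0) (ι : Type)
    [Fintype ι] (hcard : Fintype.card ι = 2) (w : ι → F) (hreg : ∀ i, w i ≠ 0)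
    (haniso : ¬ FormIsotropic F w) (hhyp : FormHyperbolic F (Sum.elim w w))
    (a₁ : F) (ha : a₁ ≠ 0) (hrep : ∃ v : ι → F, ∑ i, w i * v i ^ 2 = a₁) :
    ∃ s : F, SumTwoSq F s ∧ FormEquiv F w ![a₁, -(a₁ * s)] := by
  classical
  -- index the two elements of ι
  obtain ⟨k⟩ : Nonempty (Fin 2 ≃ ι) := ⟨(Fintype.equivFinOfCardEq hcard).symm⟩
  set i0 := k 0 with hi0
  set i1 := k 1 with hi1
  have hne : i0 ≠ i1 := by
    intro h; exact absurd (k.injective h) (by decide)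
  have hsum : ∀ f : ι → F, ∑ i, f i = f i0 + f i1 := by
    intro f
    rw [← Equiv.sum_comp k f, Fin.sum_univ_two]
  have hcases : ∀ i : ι, i = i0 ∨ i = i1 := by
    intro i
    have h := k.apply_symm_apply i
    rcases Fin.exists_fin_two.mp ⟨k.symm i, rfl⟩ with h' | h'
    · left; rw [← h, h']
    · right; rw [← h, h']
  -- extract an isotropic vector of B ⊥ B
  obtain ⟨m, e, he⟩ := hhyp
  rcases m with _ | m'
  · exfalso
    have h1 : (fun _ => (1:F)) = (0 : ι ⊕ ι → F) := e.injective (Subsingleton.elim _ _)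
    exact one_ne_zero (congrFun h1 (Sum.inl i0))
  set v' : Fin (m'+1) × Fin 2 → F := fun p => if p.1 = 0 then 1 else 0 with hv'
  have hv'ne : v' ≠ 0 := by
    intro h
    have := congrFun h (0, 0)
    simp [hv'] at this
  set u : ι ⊕ ι → F := e.symm v' with hu
  have heu : e u = v' := e.apply_symm_apply v'
  have hQ0 : ∑ i, Sum.elim w w i * u i ^ 2 = 0 := by
    rw [← he u, heu]
    rw [Fintype.sum_prod_type]
    simp [hv', Fin.sum_univ_two, apply_ite]
  set x : ι → F := fun i => u (Sum.inl i) with hx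
  set y : ι → F := fun i => u (Sum.inr i) with hy
  have hQxy : (∑ i, w i * x i ^ 2) + (∑ i, w i * y i ^ 2) = 0 := by
    rw [← hQ0, Fintype.sum_sum_type]
    simp [hx, hy]
  have hune : u ≠ 0 := by
    intro h; apply hv'ne
    rw [← heu, h, map_zero]
  have hxne : x ≠ 0 := by
    intro h
    have hQy : ∑ i, w i * y i ^ 2 = 0 := by
      rw [h] at hQxy; simpa using hQxy
    have hyz : y = 0 := by
      by_contra hy0
      exact haniso ⟨y, hy0, hQy⟩
    apply hune
    funext i
    cases i with
    | inl i => exact congrFun h i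
    | inr i => exact congrFun hyz i
  have hyne : y ≠ 0 := by
    intro h
    have hQx : ∑ i, w i * x i ^ 2 = 0 := by
      rw [h] at hQxy; simpa using hQxy
    exact haniso ⟨x, hxne, hQx⟩
  set c : F := ∑ i, w i * x i ^ 2 with hc
  have hcne : c ≠ 0 := by
    intro h; exact haniso ⟨x, hxne, h⟩
  have hQy : w i0 * y i0 ^ 2 + w i1 * y i1 ^ 2 = -c := by
    have h := hQxy
    rw [hsum (fun i => w i * y i ^ 2)] at h
    linear_combination h
  have hQx : w i0 * x i0 ^ 2 + w i1 * x i1 ^ 2 = c := by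
    rw [hc, hsum (fun i => w i * x i ^ 2)]
  -- Brahmagupta
  have hkey : -(c^2) = (w i0 * x i0 * y i0 + w i1 * x i1 * y i1)^2
      + (w i0 * w i1) * (x i0 * y i1 - x i1 * y i0)^2 := by
    have h : (w i0 * x i0 ^ 2 + w i1 * x i1 ^ 2) * (w i0 * y i0 ^ 2 + w i1 * y i1 ^ 2)
        = (w i0 * x i0 * y i0 + w i1 * x i1 * y i1)^2
          + (w i0 * w i1) * (x i0 * y i1 - x i1 * y i0)^2 := by ring
    rw [hQx, hQy] at h
    linear_combination h
  set A : F := w i0 * x i0 * y i0 + w i1 * x i1 * y i1 with hA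
  set D : F := x i0 * y i1 - x i1 * y i0 with hD
  obtain ⟨s, t, ht0, hst, hs2⟩ :
      ∃ s t : F, t ≠ 0 ∧ s = -(w i0 * w i1) * t^2 ∧ SumTwoSq F s := by
    by_cases hDz : D = 0
    · -- -1 is a square
      have hA2 : A ^ 2 = -(c^2) := by
        rw [hDz] at hkey
        linear_combination -hkey
      obtain ⟨j, hj⟩ : ∃ j : F, j ^ 2 = -1 :=
        ⟨A / c, by rw [div_pow, hA2, neg_div, div_self (pow_ne_zero 2 hcne)]⟩
      refine ⟨-(w i0 * w i1), 1, one_ne_zero, by ring, ?_, ?_⟩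
      · simp [hreg i0, hreg i1]
      · refine ⟨(-(w i0 * w i1)+1)/2, j*(-(w i0 * w i1)-1)/2, ?_⟩
        field_simp
        linear_combination (-(-(w i0 * w i1)-1)^2) * hj
    · refine ⟨c^2 + A^2, D, hDz, by linear_combination -hkey, ?_, c, A, by ring⟩
      intro h
      have h0 : -(w i0 * w i1) * D^2 = 0 := by linear_combination hkey + h
      rcases mul_eq_zero.mp h0 with h' | h'
      · rw [neg_eq_zero] at h'
        rcases mul_eq_zero.mp h' with h'' | h''
        · exact hreg i0 h''
        · exact hreg i1 h''
      · exact hDz (pow_eq_zero_iff (by norm_num) |>.mp h')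
  -- the representing vector
  obtain ⟨p, hp⟩ := hrep
  have hp2 : w i0 * p i0 ^ 2 + w i1 * p i1 ^ 2 = a₁ := by
    rw [← hp, hsum (fun i => w i * p i ^ 2)]
  have hane : w i0 * p i0 ^ 2 + w i1 * p i1 ^ 2 ≠ 0 := by rw [hp2]; exact ha
  refine ⟨s, hs2, ?_⟩
  -- build the linear equivalence
  set φ : (ι → F) →ₗ[F] (Fin 2 → F) :=
    { toFun := fun v => ![ (w i0 * p i0 * v i0 + w i1 * p i1 * v i1)/a₁,
                           (p i1 * v i0 - p i0 * v i1)/(t*a₁) ],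
      map_add' := by
        intro v v'; funext j; fin_cases j <;> simp <;> ring
      map_smul' := by
        intro r v; funext j; fin_cases j <;> simp <;> ring } with hφ
  set ψ : (Fin 2 → F) →ₗ[F] (ι → F) :=
    { toFun := fun z => fun i => if i = i0 then p i0 * z 0 + t * w i1 * p i1 * z 1
                                 else p i1 * z 0 - t * w i0 * p i0 * z 1,
      map_add' := by
        intro z z'; funext i; by_cases h : i = i0 <;> simp [h] <;> ring
      map_smul' := by
        intro r z; funext i; by_cases h : i = i0 <;> simp [h] <;> ring } with hψ
  have hψφ : ψ.comp φ = LinearMap.id := by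
    apply LinearMap.ext
    intro v
    funext i
    rcases hcases i with h | h <;> subst h <;>
      simp only [LinearMap.comp_apply, LinearMap.id_apply, hφ, hψ, LinearMap.coe_mk,
        AddHom.coe_mk, Matrix.cons_val_zero, Matrix.cons_val_one, Matrix.head_cons,
        if_pos rfl, if_neg hne, if_neg (Ne.symm hne), ite_true] <;>
      field_simp <;> subst hp2 <;> ring
  have hφψ : φ.comp ψ = LinearMap.id := by
    apply LinearMap.ext
    intro z
    funext j
    fin_cases j <;>
      simp only [LinearMap.comp_apply, LinearMap.id_apply, hφ, hψ, LinearMap.coe_mk,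
        AddHom.coe_mk, Matrix.cons_val_zero, Matrix.cons_val_one, Matrix.head_cons,
        if_pos rfl, if_neg hne, if_neg (Ne.symm hne), Fin.mk_one, Fin.zero_eta, ite_true] <;>
      field_simp <;> subst hp2 <;> ring
  refine ⟨LinearEquiv.ofLinear φ ψ hφψ hψφ, ?_⟩
  intro v
  rw [hsum (fun i => w i * v i ^ 2), Fin.sum_univ_two]
  simp only [LinearEquiv.ofLinear_apply, hφ, LinearMap.coe_mk, AddHom.coe_mk,
    Matrix.cons_val_zero, Matrix.cons_val_one, Matrix.head_cons]
  rw [hst, ← hp2]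
  field_simp
  ring
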